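/- Let p ∈ [0,1] and ε > 0, and set λ := (1/2)·(3 + √(9 + 2ε(1−2p+ε/2))) and μ := 1 + λ + ε/2. Then 9 + 2ε(1−2p+ε/2) > 0, λ > ε/2, and p·(1/(μ−ε−1) + 2/(2λ+1+ε−μ)) + (1−p)·(1/(μ−1) + 2/(2λ+1−μ)) = 1. -/

import Mathlib

theorem stmt_8 (p ε lam μ : ℝ) (hp0 : 0 ≤ p) (hp1 : p ≤ 1) (hε : 0 < ε)
    (hlam : lam = (1 / 2) * (3 + Real.sqrt (9 + 2 * ε * (1 - 2 * p + ε / 2))))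
    (hμ : μ = 1 + lam + ε / 2) :
    0 < 9 + 2 * ε * (1 - 2 * p + ε / 2) ∧
    ε / 2 < lam ∧
    p * (1 / (μ - ε - 1) + 2 / (2 * lam + 1 + ε - μ)) +
      (1 - p) * (1 / (μ - 1) + 2 / (2 * lam + 1 - μ)) = 1 := by
  have hD : 0 < 9 + 2 * ε * (1 - 2 * p + ε / 2) := by nlinarith [sq_nonneg (ε - 1)]
  set s := Real.sqrt (9 + 2 * ε * (1 - 2 * p + ε / 2)) with hs
  have hs0 : 0 ≤ s := Real.sqrt_nonneg _
  have hs2 : s ^ 2 = 9 + 2 * ε * (1 - 2 * p + ε / 2) := Real.sq_sqrt hD.le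
  have hεs : ε < 3 + s := by
    by_contra h
    push_neg at h
    nlinarith
  have hlt : ε / 2 < lam := by rw [hlam]; linarith
  refine ⟨hD, hlt, ?_⟩
  have ha : lam - ε / 2 > 0 := by linarith
  have hb : lam + ε / 2 > 0 := by linarith
  have hkey : lam ^ 2 - 3 * lam = ε ^ 2 / 4 + ε / 2 * (1 - 2 * p) := by
    rw [hlam]; nlinarith [hs2]
  have h1 : μ - ε - 1 ≠ 0 := by rw [hμ]; nlinarith
  have h2 : 2 * lam + 1 + ε - μ ≠ 0 := by rw [hμ]; nlinarith
  have h3 : μ - 1 ≠ 0 := by rw [hμ]; nlinarith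
  have h4 : 2 * lam + 1 - μ ≠ 0 := by rw [hμ]; nlinarith
  subst hμ
  rw [show (1 + lam + ε / 2 - ε - 1 : ℝ) = lam - ε / 2 by ring,
    show (2 * lam + 1 + ε - (1 + lam + ε / 2) : ℝ) = lam + ε / 2 by ring,
    show (1 + lam + ε / 2 - 1 : ℝ) = lam + ε / 2 by ring,
    show (2 * lam + 1 - (1 + lam + ε / 2) : ℝ) = lam - ε / 2 by ring]
  have ha' : lam - ε / 2 ≠ 0 := ne_of_gt ha
  have hb' : lam + ε / 2 ≠ 0 := ne_of_gt hb
  rw [div_add_div _ _ ha' hb', div_add_div _ _ hb' ha', ← mul_div_assoc, ← mul_div_assoc,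
    show (lam + ε / 2) * (lam - ε / 2) = (lam - ε / 2) * (lam + ε / 2) by ring,
    ← add_div, div_eq_one_iff_eq (mul_ne_zero ha' hb')]
  linear_combination -hkey
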